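/- Let 𝓛 be a Ruelle–Perron–Frobenius transfer operator on C(Σ) with Hölder potential g, with positive eigenfunction p (𝓛p = p), conformal measure ν (𝓛*ν = ν, ∫p dν = 1), and convergence 𝓛ⁿf → p·∫f dν uniformly for all continuous f. If h : Σ → [0,∞) is upper semi-continuous and satisfies h ≤ 𝓛h pointwise, then h = p · ∫h dν everywhere; in particular either h ≡ 0 or inf_Σ h > 0. -/

import Mathlib

open MeasureTheory Filter
open scoped ENNReal

noncomputable section

variable {ι : Type}

/-- Prepending a symbol to an infinite word: `cons k ī = kī`. -/
def consW (k : ι) (ib : ℕ → ι) : ℕ → ι := fun n => Nat.casesOn n k ib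

/-- The Ruelle–Perron–Frobenius transfer operator with potential `g`:
`(𝓛 f)(ī) = ∑ₖ e^{g(kī)} f(kī)`. -/
noncomputable def transferOp [Fintype ι] (g : (ℕ → ι) → ℝ) (f : (ℕ → ι) → ℝ) :
    (ℕ → ι) → ℝ :=
  fun ib => ∑ k : ι, Real.exp (g (consW k ib)) * f (consW k ib)

section AuxRPF
set_option linter.unusedSectionVars false
set_option linter.unusedVariables false
variable [Fintype ι] [Nonempty ι] [TopologicalSpace ι] [DiscreteTopology ι]

def cylSet (n : ℕ) (w : ℕ → ι) : Set (ℕ → ι) := {x | ∀ k < n, x k = w k}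

lemma mem_cylSet_self (n : ℕ) (w : ℕ → ι) : w ∈ cylSet n w := fun _ _ => rfl

lemma cylSet_anti {m n : ℕ} (hmn : m ≤ n) (w : ℕ → ι) : cylSet n w ⊆ cylSet m w :=
  fun _ hx k hk => hx k (lt_of_lt_of_le hk hmn)

lemma isOpen_cylSet (n : ℕ) (w : ℕ → ι) : IsOpen (cylSet n w) := by
  have : cylSet n w = ⋂ k ∈ Finset.range n, (fun x : ℕ → ι => x k) ⁻¹' {w k} := by
    ext x; simp [cylSet]
  rw [this]
  exact isOpen_biInter_finset fun k _ =>
    (continuous_apply k).isOpen_preimage _ (isOpen_discrete _)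

lemma continuous_of_depends (F : (ℕ → ι) → ℝ) (n : ℕ)
    (hF : ∀ x y, (∀ k < n, x k = y k) → F x = F y) : Continuous F := by
  apply IsLocallyConstant.continuous
  rw [IsLocallyConstant.iff_exists_open]
  intro x
  exact ⟨cylSet n x, isOpen_cylSet n x, mem_cylSet_self n x, fun y hy => hF y x hy⟩

lemma exists_cylSet_subset {x : ℕ → ι} {U : Set (ℕ → ι)} (hU : U ∈ nhds x) :
    ∃ n, cylSet n x ⊆ U := by
  rw [nhds_pi, Filter.mem_pi] at hU
  obtain ⟨I, hI, V, hV, hsub⟩ := hU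
  obtain ⟨N, hN⟩ := hI.bddAbove
  refine ⟨N + 1, fun y hy => hsub fun i hi => ?_⟩
  have hiN : i ≤ N := hN hi
  rw [hy i (by omega)]
  exact mem_of_mem_nhds (hV i)

lemma continuous_consW (k : ι) : Continuous (consW (ι := ι) k) := by
  apply continuous_pi
  intro n
  cases n with
  | zero => exact continuous_const
  | succ m => exact continuous_apply m

lemma transferOp_continuous (g f : (ℕ → ι) → ℝ) (hg : Continuous g) (hf : Continuous f) :
    Continuous (transferOp g f) :=
  continuous_finset_sum _ fun k _ =>
    (Real.continuous_exp.comp (hg.comp (continuous_consW k))).mul (hf.comp (continuous_consW k))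

lemma transferOp_mono (g : (ℕ → ι) → ℝ) {f f' : (ℕ → ι) → ℝ} (hff' : ∀ x, f x ≤ f' x) :
    ∀ x, transferOp g f x ≤ transferOp g f' x :=
  fun _ => Finset.sum_le_sum fun k _ =>
    mul_le_mul_of_nonneg_left (hff' _) (Real.exp_nonneg _)

lemma transferOp_iterate_mono (g : (ℕ → ι) → ℝ) {f f' : (ℕ → ι) → ℝ} (hff' : ∀ x, f x ≤ f' x)
    (n : ℕ) : ∀ x, (transferOp g)^[n] f x ≤ (transferOp g)^[n] f' x := by
  induction n generalizing f f' with
  | zero => exact hff'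
  | succ m ih =>
      intro x
      rw [Function.iterate_succ_apply, Function.iterate_succ_apply]
      exact ih (transferOp_mono g hff') x

lemma transferOp_iterate_continuous (g : (ℕ → ι) → ℝ) (hg : Continuous g) (n : ℕ)
    {f : (ℕ → ι) → ℝ} (hf : Continuous f) : Continuous ((transferOp g)^[n] f) := by
  induction n generalizing f with
  | zero => exact hf
  | succ m ih =>
      rw [Function.iterate_succ_apply]
      exact ih (transferOp_continuous g f hg hf)

lemma cont_integrable {X : Type} [TopologicalSpace X] [CompactSpace X] [MeasurableSpace X]
    [OpensMeasurableSpace X] (ν : Measure X) [IsFiniteMeasure ν]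
    {f : X → ℝ} (hf : Continuous f) : Integrable f ν :=
  hf.integrable_of_hasCompactSupport
    (IsCompact.of_isClosed_subset isCompact_univ (isClosed_tsupport f) (Set.subset_univ _))

variable [MeasurableSpace ι] [BorelSpace ι]

example : OpensMeasurableSpace (ℕ → ι) := by infer_instance
example : BorelSpace (ℕ → ι) := by infer_instance
example : CompactSpace (ℕ → ι) := by infer_instance

lemma indicator_cyl_continuous (n : ℕ) (w : ℕ → ι) :
    Continuous ((cylSet n w).indicator fun _ => (1 : ℝ)) := by
  apply continuous_of_depends _ n
  intro x y hxy
  have hiff : x ∈ cylSet n w ↔ y ∈ cylSet n w := by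
    constructor <;> intro hm k hk
    · rw [← hxy k hk]; exact hm k hk
    · rw [hxy k hk]; exact hm k hk
  by_cases hx : x ∈ cylSet n w
  · rw [Set.indicator_of_mem hx, Set.indicator_of_mem (hiff.mp hx)]
  · rw [Set.indicator_of_notMem hx, Set.indicator_of_notMem (fun hy => hx (hiff.mpr hy))]

lemma cylSet_measure_pos (g : (ℕ → ι) → ℝ) (hg : Continuous g)
    (ν : Measure (ℕ → ι)) [IsProbabilityMeasure ν]
    (hνconf : ∀ f : (ℕ → ι) → ℝ, Continuous f →
      ∫ x, transferOp g f x ∂ν = ∫ x, f x ∂ν) :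
    ∀ (n : ℕ) (w : ℕ → ι), 0 < ν (cylSet n w) := by
  obtain ⟨x₀, -, hB⟩ := isCompact_univ.exists_isMinOn Set.univ_nonempty hg.continuousOn
  intro n
  induction n with
  | zero =>
      intro w
      have huniv : cylSet (ι := ι) 0 w = Set.univ := by ext x; simp [cylSet]
      rw [huniv]; simp
  | succ m ih =>
      intro w
      set C : Set (ℕ → ι) := cylSet (m + 1) w with hCdef
      set C' : Set (ℕ → ι) := cylSet m (fun k => w (k + 1)) with hC'def
      have hmem : ∀ x : ℕ → ι, x ∈ C' → consW (w 0) x ∈ C := by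
        intro x hx k hk
        cases k with
        | zero => rfl
        | succ j => exact hx j (by omega)
      have hnonneg : ∀ (D : Set (ℕ → ι)) y, (0:ℝ) ≤ D.indicator (fun _ => (1:ℝ)) y :=
        fun D y => Set.indicator_nonneg (fun _ _ => zero_le_one) _
      have key : ∀ x, Real.exp (g x₀) * (C'.indicator (fun _ => (1:ℝ)) x)
          ≤ transferOp g (C.indicator fun _ => (1:ℝ)) x := by
        intro x
        by_cases hx : x ∈ C'
        · rw [Set.indicator_of_mem hx, mul_one]
          have h1 : Real.exp (g x₀)
              ≤ Real.exp (g (consW (w 0) x)) * (C.indicator (fun _ => (1:ℝ)) (consW (w 0) x)) := by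
            rw [Set.indicator_of_mem (hmem x hx), mul_one]
            exact Real.exp_le_exp.mpr (hB (Set.mem_univ _))
          refine h1.trans ?_
          exact Finset.single_le_sum
            (f := fun k => Real.exp (g (consW k x)) * (C.indicator (fun _ => (1:ℝ)) (consW k x)))
            (fun k _ => mul_nonneg (Real.exp_nonneg _) (hnonneg _ _)) (Finset.mem_univ (w 0))
        · rw [Set.indicator_of_notMem hx, mul_zero]
          exact Finset.sum_nonneg fun k _ => mul_nonneg (Real.exp_nonneg _) (hnonneg _ _)
      have hcont : Continuous (C.indicator fun _ => (1:ℝ)) := indicator_cyl_continuous _ _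
      have hcont' : Continuous (C'.indicator fun _ => (1:ℝ)) := indicator_cyl_continuous _ _
      have h1 : (ν C).toReal = ∫ x, transferOp g (C.indicator fun _ => (1:ℝ)) x ∂ν := by
        rw [hνconf _ hcont, integral_indicator_const (1:ℝ) (isOpen_cylSet _ _).measurableSet,
          smul_eq_mul, mul_one]
        rfl
      have h2 : Real.exp (g x₀) * (ν C').toReal ≤ (ν C).toReal := by
        have h1' : ∫ x, C'.indicator (fun _ => (1:ℝ)) x ∂ν = (ν C').toReal := by
          rw [integral_indicator_const (1:ℝ) (isOpen_cylSet _ _).measurableSet, smul_eq_mul,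
            mul_one]
          rfl
        rw [h1, ← h1', ← integral_const_mul]
        exact integral_mono ((cont_integrable ν hcont').const_mul _)
          (cont_integrable ν (transferOp_continuous g _ hg hcont)) key
      have h3 : 0 < (ν C).toReal :=
        lt_of_lt_of_le (mul_pos (Real.exp_pos _)
          (ENNReal.toReal_pos (ih _).ne' (measure_ne_top ν _))) h2
      exact (ENNReal.toReal_pos_iff.mp h3).1

lemma integral_transferOp_iterate (g : (ℕ → ι) → ℝ) (hg : Continuous g)
    (ν : Measure (ℕ → ι))
    (hνconf : ∀ f : (ℕ → ι) → ℝ, Continuous f →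
      ∫ x, transferOp g f x ∂ν = ∫ x, f x ∂ν) :
    ∀ (n : ℕ) (f : (ℕ → ι) → ℝ), Continuous f →
      ∫ x, (transferOp g)^[n] f x ∂ν = ∫ x, f x ∂ν := by
  intro n
  induction n with
  | zero => intro f hf; simp
  | succ m ih =>
      intro f hf
      rw [Function.iterate_succ_apply, ih _ (transferOp_continuous g f hg hf), hνconf f hf]

end AuxRPF

/-- If `𝓛` is an RPF transfer operator on `C(Σ)` with Hölder potential `g`, positive
eigenfunction `p` (`𝓛p = p`), conformal measure `ν` (`𝓛*ν = ν`, `∫ p dν = 1`) and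
uniform convergence `𝓛ⁿ f → p ∫ f dν` for continuous `f`, then any upper
semi-continuous `h : Σ → [0, ∞)` with `h ≤ 𝓛h` satisfies `h = p · ∫ h dν`;
in particular either `h ≡ 0` or `inf h > 0`. -/


theorem stmt9 [Fintype ι] [Nonempty ι]
    [TopologicalSpace ι] [DiscreteTopology ι] [MeasurableSpace ι] [BorelSpace ι]
    (g : (ℕ → ι) → ℝ) (hg : Continuous g)
    (hgHolder : ∃ c : ℝ, 0 < c ∧ ∃ α : ℝ, 0 < α ∧ ∀ (ib jb : ℕ → ι) (n : ℕ),
      (∀ k < n, ib k = jb k) → |g ib - g jb| ≤ c * (2 : ℝ) ^ (-(α * n)))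
    (p : (ℕ → ι) → ℝ) (hpc : Continuous p) (hppos : ∀ ib, 0 < p ib)
    (hpfix : transferOp g p = p)
    (ν : Measure (ℕ → ι)) [IsProbabilityMeasure ν]
    (hνconf : ∀ f : (ℕ → ι) → ℝ, Continuous f →
      ∫ x, transferOp g f x ∂ν = ∫ x, f x ∂ν)
    (hpnorm : ∫ x, p x ∂ν = 1)
    (hconv : ∀ f : (ℕ → ι) → ℝ, Continuous f →
      TendstoUniformly (fun n => (transferOp g)^[n] f) (fun ib => p ib * ∫ x, f x ∂ν) atTop)
    (h : (ℕ → ι) → ℝ) (hh0 : ∀ ib, 0 ≤ h ib) (husc : UpperSemicontinuous h)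
    (hsub : ∀ ib, h ib ≤ transferOp g h ib) :
    (∀ ib, h ib = p ib * ∫ x, h x ∂ν) ∧
      ((∀ ib, h ib = 0) ∨ ∃ ε : ℝ, 0 < ε ∧ ∀ ib, ε ≤ h ib) := by
  classical
  set c : ℝ := ∫ x, h x ∂ν with hc
  -- boundedness of h via compactness
  have hUopen : ∀ n : ℕ, IsOpen {x : ℕ → ι | h x < n} := fun n =>
    upperSemicontinuous_iff_isOpen_preimage.mp husc n
  obtain ⟨t, ht⟩ := isCompact_univ.elim_finite_subcover (fun n : ℕ => {x : ℕ → ι | h x < n})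
    hUopen (fun x _ => Set.mem_iUnion.mpr ⟨⌈h x⌉₊ + 1, by
      simp only [Set.mem_setOf_eq]
      push_cast
      exact lt_of_le_of_lt (Nat.le_ceil _) (by linarith)⟩)
  set M : ℝ := ((t.sup id : ℕ) : ℝ) with hMdef
  have hhM : ∀ x, h x ≤ M := by
    intro x
    obtain ⟨n, hnt, hn⟩ := Set.mem_iUnion₂.mp (ht (Set.mem_univ x))
    have hcast : (n : ℝ) ≤ M := by
      rw [hMdef]; exact_mod_cast Finset.le_sup (f := id) hnt
    exact le_trans (le_of_lt hn) hcast
  -- the continuous approximations from above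
  set F : ℕ → (ℕ → ι) → ℝ := fun m x => sSup (h '' cylSet m x) with hFdef
  have hbddim : ∀ s : Set (ℕ → ι), BddAbove (h '' s) := by
    intro s; exact ⟨M, by rintro _ ⟨y, -, rfl⟩; exact hhM y⟩
  have hneim : ∀ m (x : ℕ → ι), (h '' cylSet m x).Nonempty :=
    fun m x => ⟨h x, x, mem_cylSet_self m x, rfl⟩
  have hFge : ∀ m x, h x ≤ F m x := fun m x => le_csSup (hbddim _) ⟨x, mem_cylSet_self m x, rfl⟩
  have hFle : ∀ m x, F m x ≤ M := fun m x =>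
    csSup_le (hneim m x) (by rintro _ ⟨y, -, rfl⟩; exact hhM y)
  have hFnn : ∀ m x, 0 ≤ F m x := fun m x => (hh0 x).trans (hFge m x)
  have hFcont : ∀ m, Continuous (F m) := by
    intro m
    apply continuous_of_depends _ m
    intro x y hxy
    have hcyl : cylSet m x = cylSet m y := by
      ext z
      constructor <;> intro hz k hk
      · rw [← hxy k hk]; exact hz k hk
      · rw [hxy k hk]; exact hz k hk
    simp only [hFdef, hcyl]
  have hFtend : ∀ x, Tendsto (fun m => F m x) atTop (nhds (h x)) := by
    intro x
    rw [tendsto_order]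
    constructor
    · intro b hb
      exact Filter.Eventually.of_forall fun m => lt_of_lt_of_le hb (hFge m x)
    · intro b hb
      have hmid : h x < (h x + b) / 2 := by linarith
      have hev : {z : ℕ → ι | h z < (h x + b) / 2} ∈ nhds x := husc x _ hmid
      obtain ⟨n, hn⟩ := exists_cylSet_subset hev
      rw [eventually_atTop]
      refine ⟨n, fun m hm => ?_⟩
      have hle : F m x ≤ (h x + b) / 2 := csSup_le (hneim m x) (by
        rintro _ ⟨z, hz, rfl⟩
        exact (hn (cylSet_anti hm x hz)).le)
      have : (h x + b) / 2 < b := by linarith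
      exact lt_of_le_of_lt hle this
  -- integrability
  have hmeash : Measurable h := husc.measurable
  have hinth : Integrable h ν := by
    refine (integrable_const M).mono' hmeash.aestronglyMeasurable
      (Filter.Eventually.of_forall fun x => ?_)
    rw [Real.norm_eq_abs, abs_of_nonneg (hh0 x)]
    exact hhM x
  have htendint : Tendsto (fun m => ∫ x, F m x ∂ν) atTop (nhds c) := by
    rw [hc]
    exact tendsto_integral_of_dominated_convergence (fun _ => M)
      (fun m => (hFcont m).aestronglyMeasurable)
      (integrable_const M)
      (fun m => Filter.Eventually.of_forall fun x => by
        rw [Real.norm_eq_abs, abs_of_nonneg (hFnn m x)]; exact hFle m x)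
      (Filter.Eventually.of_forall hFtend)
  -- Step A : h ≤ p * c
  have hhn : ∀ n y, h y ≤ (transferOp g)^[n] h y := by
    intro n
    induction n with
    | zero => intro y; exact le_rfl
    | succ j ihj =>
        intro y
        rw [Function.iterate_succ_apply]
        exact le_trans (ihj y) (transferOp_iterate_mono g hsub j y)
  have hA : ∀ x, h x ≤ p x * c := by
    intro x
    have h1 : ∀ m, h x ≤ p x * ∫ y, F m y ∂ν := by
      intro m
      have hlim := (hconv (F m) (hFcont m)).tendsto_at x
      exact ge_of_tendsto' hlim
        (fun n => le_trans (hhn n x) (transferOp_iterate_mono g (hFge m) n x))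
    exact ge_of_tendsto' (htendint.const_mul (p x)) h1
  -- Step B : h = p * c everywhere
  set u : (ℕ → ι) → ℝ := fun x => p x * c - h x with hu
  have hunn : ∀ x, 0 ≤ u x := fun x => sub_nonneg.mpr (hA x)
  have hintp : Integrable p ν := cont_integrable ν hpc
  have hintu : Integrable u ν := (hintp.mul_const c).sub hinth
  have hintegral_u : ∫ x, u x ∂ν = 0 := by
    rw [hu, integral_sub (hintp.mul_const c) hinth, integral_mul_const, hpnorm, one_mul, ← hc,
      sub_self]
  have huae : ∀ᵐ x ∂ν, u x = 0 :=
    ((integral_eq_zero_iff_of_nonneg hunn hintu).mp hintegral_u).mono fun x hx => hx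
  have hnull : ν {x | u x ≠ 0} = 0 := by
    rwa [MeasureTheory.ae_iff] at huae
  have hopen : IsOpen {x : ℕ → ι | 0 < u x} := by
    rw [isOpen_iff_mem_nhds]
    intro x hx
    have hx' : 0 < p x * c - h x := hx
    have hev1 : ∀ᶠ z in nhds x, h z < h x + (p x * c - h x) / 2 := husc x _ (by linarith)
    have hev2 : ∀ᶠ z in nhds x, p x * c - (p x * c - h x) / 2 < p z * c :=
      ((hpc.mul continuous_const).tendsto x).eventually (eventually_gt_nhds (by show p x * c - (p x * c - h x) / 2 < p x * c; linarith))
    filter_upwards [hev1, hev2] with z h1 h2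
    show 0 < p z * c - h z
    linarith
  have hzero : ∀ x, u x = 0 := by
    intro x
    by_contra hne
    have hpos : 0 < u x := lt_of_le_of_ne (hunn x) (Ne.symm hne)
    obtain ⟨n, hn⟩ := exists_cylSet_subset (hopen.mem_nhds hpos)
    have hsubne : cylSet n x ⊆ {y | u y ≠ 0} := fun y hy => (hn hy).ne'
    exact absurd (measure_mono_null hsubne hnull)
      (cylSet_measure_pos g hg ν hνconf n x).ne'
  have hmain : ∀ ib, h ib = p ib * c := by
    intro ib
    have h0 := hzero ib
    have : u ib = p ib * c - h ib := rfl
    rw [this] at h0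
    linarith
  refine ⟨hmain, ?_⟩
  have hc0 : 0 ≤ c := by rw [hc]; exact integral_nonneg hh0
  rcases eq_or_lt_of_le hc0 with heq | hlt
  · left; intro ib; rw [hmain ib, ← heq, mul_zero]
  · right
    obtain ⟨y₀, -, hy₀⟩ := isCompact_univ.exists_isMinOn Set.univ_nonempty hpc.continuousOn
    refine ⟨p y₀ * c, mul_pos (hppos y₀) hlt, fun ib => ?_⟩
    rw [hmain ib]
    exact mul_le_mul_of_nonneg_right (isMinOn_iff.mp hy₀ ib (Set.mem_univ ib)) hc0

end
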